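/- The state category of the net N′_n (the pipeline net with transition t₂ deleted) is isomorphic to the product category 𝕀 × C_{n-2}, where 𝕀 = {0 < 1} is the two-element chain and C_{n-2} is the state category of N_{n-2}; in particular the state category of N′_n is a poset with least and greatest elements. -/

import Mathlib

/-! Concrete pipeline Petri nets. States of a net with `m` places are `Fin m → Bool`. -/

/-- The "tail" pipeline net `N` with `m` places `p₁,…,p_m` (0-indexed `0,…,m-1`) and `m`
events `t₂,…,t_{m+1}` (0-indexed: event `j` is `t_{j+2}` with `pre = {p_{j+1}}`, i.e. place
`j`, and `post = {p_{j+2}}`, i.e. place `j+1`, when `j+1 < m`, and `post = ∅` for the last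
event).  `stepT m s e` is the partial firing of event `e` at state `s`. -/
def stepT (m : ℕ) (s : Fin m → Bool) (e : Fin m) : Option (Fin m → Bool) :=
  if s e = true then
    if h : (e : ℕ) + 1 < m then
      if s ⟨(e : ℕ) + 1, h⟩ = false then
        some (Function.update (Function.update s e false) ⟨(e : ℕ) + 1, h⟩ true)
      else none
    else some (Function.update s e false)
  else none

/-- Firing a word (list) of events, `s · (a :: l) = (s · a) · l`. -/
def stepsT (m : ℕ) : (Fin m → Bool) → List (Fin m) → Option (Fin m → Bool)
  | s, [] => some s
  | s, a :: l => (stepT m s a).bind fun s' => stepsT m s' l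

/-- Resources (`pre ∪ post`, as a set of 0-indexed places) of event `e` of the tail net. -/
def resT (m : ℕ) (e : Fin m) : Set ℕ :=
  {x | x = (e : ℕ) ∨ (x = (e : ℕ) + 1 ∧ (e : ℕ) + 1 < m)}

/-- Independence of events of the tail net: disjoint resources. -/
def indepT (m : ℕ) (a b : Fin m) : Prop :=
  ∀ x, ¬(x ∈ resT m a ∧ x ∈ resT m b)

/-- One swap of adjacent independent letters in a word. -/
inductive TraceStep {E : Type} (r : E → E → Prop) : List E → List E → Prop
  | swap (u v : List E) (a b : E) : r a b →
      TraceStep r (u ++ a :: b :: v) (u ++ b :: a :: v)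

/-- Trace equivalence: two words represent the same element of the trace monoid `M(E,I)`
iff they are related by the equivalence closure of adjacent swaps of independent letters. -/
def TraceEquiv {E : Type} (r : E → E → Prop) : List E → List E → Prop :=
  Relation.EqvGen (TraceStep r)

/-- The net `N′_n`: pipeline with transition `t₂` deleted.  States are `Fin (n-1) → Bool`
(places `p₁,…,p_{n-1}`, 0-indexed).  Events are `Option (Fin (n-2))`: `none` is `t₁`
(`pre = ∅`, `post = {p₁}`, with the contact condition `p₁ ∉ s`), and `some j` is `t_{j+3}`
(`pre = {p_{j+2}}`, `post = {p_{j+3}}` when `j+3 ≤ n-1`, and `post = ∅` for `t_n`). -/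
def stepN' (n : ℕ) (s : Fin (n - 1) → Bool) : Option (Fin (n - 2)) → Option (Fin (n - 1) → Bool)
  | none =>
      if hp : 0 < n - 1 then
        if s ⟨0, hp⟩ = false then some (Function.update s ⟨0, hp⟩ true) else none
      else none
  | some j =>
      if h1 : (j : ℕ) + 1 < n - 1 then
        if s ⟨(j : ℕ) + 1, h1⟩ = true then
          if h2 : (j : ℕ) + 2 < n - 1 then
            if s ⟨(j : ℕ) + 2, h2⟩ = false then
              some (Function.update (Function.update s ⟨(j : ℕ) + 1, h1⟩ false)
                ⟨(j : ℕ) + 2, h2⟩ true)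
            else none
          else some (Function.update s ⟨(j : ℕ) + 1, h1⟩ false)
        else none
      else none

def stepsN' (n : ℕ) : (Fin (n - 1) → Bool) → List (Option (Fin (n - 2))) →
    Option (Fin (n - 1) → Bool)
  | s, [] => some s
  | s, a :: l => (stepN' n s a).bind fun s' => stepsN' n s' l

/-- Resources (`pre ∪ post`) of the events of `N′_n`. -/
def resN' (n : ℕ) : Option (Fin (n - 2)) → Set ℕ
  | none => {0}
  | some j => {x | x = (j : ℕ) + 1 ∨ (x = (j : ℕ) + 2 ∧ (j : ℕ) + 2 < n - 1)}

def indepN' (n : ℕ) (a b : Option (Fin (n - 2))) : Prop :=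
  ∀ x, ¬(x ∈ resN' n a ∧ x ∈ resN' n b)

/-- Reachability (the morphism-existence relation of the state category) in `N′_n`. -/
def reachN' (n : ℕ) (x y : Fin (n - 1) → Bool) : Prop :=
  ∃ l, stepsN' n x l = some y

/-- Reachability in the tail net `N` with `m` places (for `C_{n-2}`: the net on places
`p₂,…,p_{n-1}` with events `t₃,…,t_n`, i.e. the tail net with `m = n-2`). -/
def reachT (m : ℕ) (x y : Fin m → Bool) : Prop :=
  ∃ l, stepsT m x l = some y

section Traces
variable {E : Type} {r : E → E → Prop}

theorem te_refl (l : List E) : TraceEquiv r l l := Relation.EqvGen.refl l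

theorem te_symm {l₁ l₂ : List E} (h : TraceEquiv r l₁ l₂) : TraceEquiv r l₂ l₁ :=
  Relation.EqvGen.symm _ _ h

theorem te_trans {l₁ l₂ l₃ : List E} (h : TraceEquiv r l₁ l₂) (h' : TraceEquiv r l₂ l₃) :
    TraceEquiv r l₁ l₃ := Relation.EqvGen.trans _ _ _ h h'

theorem ts_cons {l₁ l₂ : List E} (a : E) (h : TraceStep r l₁ l₂) :
    TraceStep r (a :: l₁) (a :: l₂) := by
  cases h with
  | swap u v b c hr => exact TraceStep.swap (a :: u) v b c hr

theorem te_cons {l₁ l₂ : List E} (a : E) (h : TraceEquiv r l₁ l₂) :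
    TraceEquiv r (a :: l₁) (a :: l₂) := by
  induction h with
  | rel x y hxy => exact Relation.EqvGen.rel _ _ (ts_cons a hxy)
  | refl x => exact Relation.EqvGen.refl _
  | symm x y _ ih => exact Relation.EqvGen.symm _ _ ih
  | trans x y z _ _ ih1 ih2 => exact Relation.EqvGen.trans _ _ _ ih1 ih2

theorem te_swap_head {a b : E} (hr : r a b) (l : List E) :
    TraceEquiv r (a :: b :: l) (b :: a :: l) :=
  Relation.EqvGen.rel _ _ (TraceStep.swap [] l a b hr)

end Traces
theorem stepN'_none_iff {n : ℕ} (hn : 3 ≤ n) {x z : Fin (n - 1) → Bool} :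
    stepN' n x none = some z ↔
      (x ⟨0, by omega⟩ = false ∧ ∀ p : Fin (n - 1), z p = if (p : ℕ) = 0 then true else x p) := by
  have hp : 0 < n - 1 := by omega
  simp only [stepN']
  rw [dif_pos hp]
  split_ifs with h
  · constructor
    · rintro ⟨rfl⟩
      refine ⟨h, fun p => ?_⟩
      by_cases hp0 : (p : ℕ) = 0
      · have : p = ⟨0, hp⟩ := by exact Fin.ext hp0
        subst this; simp [Function.update_apply]
      · have : p ≠ ⟨0, hp⟩ := by simp [Fin.ext_iff]; omega
        simp [Function.update_apply, this, hp0]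
    · rintro ⟨-, hz⟩
      congr 1
      funext p
      rw [hz p]
      by_cases hp0 : (p : ℕ) = 0
      · have : p = ⟨0, hp⟩ := Fin.ext hp0
        subst this; simp [Function.update_apply]
      · have : p ≠ ⟨0, hp⟩ := by simp [Fin.ext_iff]; omega
        simp [Function.update_apply, this, hp0]
  · constructor
    · rintro ⟨⟩
    · rintro ⟨hx, -⟩; exact absurd hx h

theorem stepN'_some_iff {n : ℕ} {x z : Fin (n - 1) → Bool} {j : Fin (n - 2)} :
    stepN' n x (some j) = some z ↔
      (x ⟨(j : ℕ) + 1, by have := j.isLt; omega⟩ = true ∧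
        (∀ h2 : (j : ℕ) + 2 < n - 1, x ⟨(j : ℕ) + 2, h2⟩ = false) ∧
        ∀ p : Fin (n - 1), z p =
          if (p : ℕ) = (j : ℕ) + 1 then false
          else if (p : ℕ) = (j : ℕ) + 2 then true else x p) := by
  have h1 : (j : ℕ) + 1 < n - 1 := by have := j.isLt; omega
  simp only [stepN']
  rw [dif_pos h1]
  by_cases hx1 : x ⟨(j : ℕ) + 1, h1⟩ = true
  · rw [if_pos hx1]
    by_cases h2 : (j : ℕ) + 2 < n - 1
    · rw [dif_pos h2]
      by_cases hx2 : x ⟨(j : ℕ) + 2, h2⟩ = false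
      · rw [if_pos hx2]
        constructor
        · rintro ⟨rfl⟩
          refine ⟨hx1, fun _ => hx2, fun p => ?_⟩
          by_cases e1 : (p : ℕ) = (j : ℕ) + 1
          · have : p = ⟨(j : ℕ) + 1, h1⟩ := Fin.ext e1
            subst this
            have hne : (⟨(j : ℕ) + 1, h1⟩ : Fin (n-1)) ≠ ⟨(j : ℕ) + 2, h2⟩ := by
              simp [Fin.ext_iff]
            simp [Function.update_apply, hne, e1]
          · by_cases e2 : (p : ℕ) = (j : ℕ) + 2
            · have : p = ⟨(j : ℕ) + 2, h2⟩ := Fin.ext e2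
              subst this; simp [Function.update_apply, e1, e2]
            · have n1 : p ≠ ⟨(j : ℕ) + 1, h1⟩ := by simp [Fin.ext_iff]; omega
              have n2 : p ≠ ⟨(j : ℕ) + 2, h2⟩ := by simp [Fin.ext_iff]; omega
              simp [Function.update_apply, n1, n2, e1, e2]
        · rintro ⟨-, -, hz⟩
          congr 1
          funext p
          rw [hz p]
          by_cases e1 : (p : ℕ) = (j : ℕ) + 1
          · have : p = ⟨(j : ℕ) + 1, h1⟩ := Fin.ext e1
            subst this
            have hne : (⟨(j : ℕ) + 1, h1⟩ : Fin (n-1)) ≠ ⟨(j : ℕ) + 2, h2⟩ := by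
              simp [Fin.ext_iff]
            simp [Function.update_apply, hne, e1]
          · by_cases e2 : (p : ℕ) = (j : ℕ) + 2
            · have : p = ⟨(j : ℕ) + 2, h2⟩ := Fin.ext e2
              subst this; simp [Function.update_apply, e1, e2]
            · have n1 : p ≠ ⟨(j : ℕ) + 1, h1⟩ := by simp [Fin.ext_iff]; omega
              have n2 : p ≠ ⟨(j : ℕ) + 2, h2⟩ := by simp [Fin.ext_iff]; omega
              simp [Function.update_apply, n1, n2, e1, e2]
      · rw [if_neg hx2]
        constructor
        · rintro ⟨⟩
        · rintro ⟨-, hf, -⟩; exact absurd (hf h2) hx2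
    · rw [dif_neg h2]
      constructor
      · rintro ⟨rfl⟩
        refine ⟨hx1, fun h2' => absurd h2' h2, fun p => ?_⟩
        have e2 : ¬ ((p : ℕ) = (j : ℕ) + 2) := by have := p.isLt; omega
        by_cases e1 : (p : ℕ) = (j : ℕ) + 1
        · have : p = ⟨(j : ℕ) + 1, h1⟩ := Fin.ext e1
          subst this; simp [Function.update_apply, e1]
        · have n1 : p ≠ ⟨(j : ℕ) + 1, h1⟩ := by simp [Fin.ext_iff]; omega
          simp [Function.update_apply, n1, e1, e2]
      · rintro ⟨-, -, hz⟩
        congr 1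
        funext p
        rw [hz p]
        have e2 : ¬ ((p : ℕ) = (j : ℕ) + 2) := by have := p.isLt; omega
        by_cases e1 : (p : ℕ) = (j : ℕ) + 1
        · have : p = ⟨(j : ℕ) + 1, h1⟩ := Fin.ext e1
          subst this; simp [Function.update_apply, e1]
        · have n1 : p ≠ ⟨(j : ℕ) + 1, h1⟩ := by simp [Fin.ext_iff]; omega
          simp [Function.update_apply, n1, e1, e2]
  · rw [if_neg hx1]
    constructor
    · rintro ⟨⟩
    · rintro ⟨hx, -, -⟩; exact absurd hx hx1

theorem stepsN'_append {n : ℕ} (x : Fin (n - 1) → Bool) (l₁ l₂ : List (Option (Fin (n - 2)))) :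
    stepsN' n x (l₁ ++ l₂) = (stepsN' n x l₁).bind fun s => stepsN' n s l₂ := by
  induction l₁ generalizing x with
  | nil => simp [stepsN']
  | cons a l ih =>
    simp only [List.cons_append, stepsN']
    cases stepN' n x a with
    | none => simp
    | some s => simp [ih s]
theorem indepN'_symm {n : ℕ} {a b : Option (Fin (n - 2))} (h : indepN' n a b) :
    indepN' n b a := fun x hx => h x ⟨hx.2, hx.1⟩

theorem mem_resN'_some {n : ℕ} {j : Fin (n - 2)} {x : ℕ} :
    x ∈ resN' n (some j) ↔ (x = (j : ℕ) + 1 ∨ (x = (j : ℕ) + 2 ∧ (j : ℕ) + 2 < n - 1)) :=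
  Iff.rfl

theorem mem_resN'_none {n : ℕ} {x : ℕ} : x ∈ resN' n none ↔ x = 0 := by
  simp [resN']

/-- Two distinct events enabled at the same state are independent. -/
theorem step_indep {n : ℕ} (hn : 3 ≤ n) {x : Fin (n - 1) → Bool}
    {a b : Option (Fin (n - 2))} {xa xb : Fin (n - 1) → Bool}
    (hab : a ≠ b) (ha : stepN' n x a = some xa) (hb : stepN' n x b = some xb) :
    indepN' n a b := by
  match a, b with
  | none, none => exact absurd rfl hab
  | none, some k =>
    intro p hp
    rw [mem_resN'_none] at *
    rcases hp with ⟨rfl, hp2⟩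
    rw [mem_resN'_some] at hp2
    omega
  | some j, none =>
    intro p hp
    rcases hp with ⟨hp1, hp2⟩
    rw [mem_resN'_none] at hp2
    subst hp2
    rw [mem_resN'_some] at hp1
    omega
  | some j, some k =>
    rw [stepN'_some_iff] at ha hb
    obtain ⟨ga1, ga2, -⟩ := ha
    obtain ⟨gb1, gb2, -⟩ := hb
    intro p hp
    rcases hp with ⟨hp1, hp2⟩
    rw [mem_resN'_some] at hp1 hp2
    have hjk : (j : ℕ) ≠ (k : ℕ) := by
      intro h
      exact hab (by rw [Option.some_inj]; exact Fin.ext h)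
    rcases hp1 with rfl | ⟨rfl, hr1⟩
    · rcases hp2 with h | ⟨h, hr2⟩
      · omega
      · -- j+1 = k+2, so x (k+2) is both true and false
        have e : (⟨(j : ℕ) + 1, by have := j.isLt; omega⟩ : Fin (n - 1)) = ⟨(k : ℕ) + 2, hr2⟩ :=
          Fin.ext h
        rw [e, gb2 hr2] at ga1
        exact Bool.false_ne_true ga1
    · rcases hp2 with h | ⟨h, hr2⟩
      · have e : (⟨(k : ℕ) + 1, by have := k.isLt; omega⟩ : Fin (n - 1)) = ⟨(j : ℕ) + 2, hr1⟩ :=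
          Fin.ext h.symm
        rw [e, ga2 hr1] at gb1
        exact Bool.false_ne_true gb1
      · omega

/-- Independent enabled events commute (diamond property). -/
theorem step_commute {n : ℕ} (hn : 3 ≤ n) {x : Fin (n - 1) → Bool}
    {a b : Option (Fin (n - 2))} {xa xb : Fin (n - 1) → Bool}
    (hind : indepN' n a b) (ha : stepN' n x a = some xa) (hb : stepN' n x b = some xb) :
    ∃ z, stepN' n xa b = some z ∧ stepN' n xb a = some z := by
  match a, b with
  | none, none =>
    exact absurd ⟨mem_resN'_none.2 rfl, mem_resN'_none.2 rfl⟩ (hind 0)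
  | none, some k =>
    rw [stepN'_none_iff hn] at ha
    obtain ⟨ga, hza⟩ := ha
    rw [stepN'_some_iff] at hb
    obtain ⟨gb1, gb2, hzb⟩ := hb
    refine ⟨fun p => if (p : ℕ) = 0 then true
        else if (p : ℕ) = (k : ℕ) + 1 then false
        else if (p : ℕ) = (k : ℕ) + 2 then true else x p, ?_, ?_⟩
    · rw [stepN'_some_iff]
      refine ⟨by rw [hza]; simpa using gb1, fun h2 => by rw [hza]; simpa using gb2 h2,
        fun p => ?_⟩
      rw [hza p]
      try by_cases e0 : (p : ℕ) = 0 <;> by_cases e1 : (p : ℕ) = (k : ℕ) + 1 <;>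
        by_cases e2 : (p : ℕ) = (k : ℕ) + 2 <;> simp [e0, e1, e2] <;> try omega
    · rw [stepN'_none_iff hn]
      refine ⟨by rw [hzb]; simpa using ga, fun p => ?_⟩
      rw [hzb p]
      try by_cases e0 : (p : ℕ) = 0 <;> by_cases e1 : (p : ℕ) = (k : ℕ) + 1 <;>
        by_cases e2 : (p : ℕ) = (k : ℕ) + 2 <;> simp [e0, e1, e2] <;> try omega
  | some j, none =>
    rw [stepN'_none_iff hn] at hb
    obtain ⟨gb, hzb⟩ := hb
    rw [stepN'_some_iff] at ha
    obtain ⟨ga1, ga2, hza⟩ := ha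
    refine ⟨fun p => if (p : ℕ) = 0 then true
        else if (p : ℕ) = (j : ℕ) + 1 then false
        else if (p : ℕ) = (j : ℕ) + 2 then true else x p, ?_, ?_⟩
    · rw [stepN'_none_iff hn]
      refine ⟨by rw [hza]; simpa using gb, fun p => ?_⟩
      rw [hza p]
      try by_cases e0 : (p : ℕ) = 0 <;> by_cases e1 : (p : ℕ) = (j : ℕ) + 1 <;>
        by_cases e2 : (p : ℕ) = (j : ℕ) + 2 <;> simp [e0, e1, e2] <;> try omega
    · rw [stepN'_some_iff]
      refine ⟨by rw [hzb]; simpa using ga1, fun h2 => by rw [hzb]; simpa using ga2 h2,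
        fun p => ?_⟩
      rw [hzb p]
      try by_cases e0 : (p : ℕ) = 0 <;> by_cases e1 : (p : ℕ) = (j : ℕ) + 1 <;>
        by_cases e2 : (p : ℕ) = (j : ℕ) + 2 <;> simp [e0, e1, e2] <;> try omega
  | some j, some k =>
    rw [stepN'_some_iff] at ha hb
    obtain ⟨ga1, ga2, hza⟩ := ha
    obtain ⟨gb1, gb2, hzb⟩ := hb
    have hk1 : (k : ℕ) + 1 < n - 1 := by have := k.isLt; omega
    have hj1 : (j : ℕ) + 1 < n - 1 := by have := j.isLt; omega
    have d1 : (k : ℕ) + 1 ≠ (j : ℕ) + 1 := by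
      intro h
      exact hind ((k : ℕ) + 1) ⟨Or.inl h, Or.inl rfl⟩
    have d2 : (k : ℕ) + 1 ≠ (j : ℕ) + 2 := by
      intro h
      exact hind ((k : ℕ) + 1) ⟨Or.inr ⟨h, by omega⟩, Or.inl rfl⟩
    have d4 : (k : ℕ) + 2 ≠ (j : ℕ) + 2 := by omega
    have d3 : (j : ℕ) + 1 ≠ (k : ℕ) + 2 := by
      intro h
      exact hind ((j : ℕ) + 1) ⟨Or.inl rfl, Or.inr ⟨h, by omega⟩⟩
    refine ⟨fun p => if (p : ℕ) = (j : ℕ) + 1 then false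
        else if (p : ℕ) = (j : ℕ) + 2 then true
        else if (p : ℕ) = (k : ℕ) + 1 then false
        else if (p : ℕ) = (k : ℕ) + 2 then true else x p, ?_, ?_⟩
    · rw [stepN'_some_iff]
      refine ⟨by rw [hza]; simp [d1, d2]; exact ⟨by omega, Or.inr gb1⟩,
        fun h2 => by rw [hza]; simp [d3.symm, d4, show ¬((k:ℕ)+1 = (j:ℕ)) from by omega, show ¬((k:ℕ) = (j:ℕ)) from by omega]; exact gb2 h2,
        fun p => ?_⟩
      rw [hza p]
      try by_cases e1 : (p : ℕ) = (j : ℕ) + 1 <;> by_cases e2 : (p : ℕ) = (j : ℕ) + 2 <;>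
        by_cases e3 : (p : ℕ) = (k : ℕ) + 1 <;> by_cases e4 : (p : ℕ) = (k : ℕ) + 2 <;>
        simp [e1, e2, e3, e4] <;> try omega
    · rw [stepN'_some_iff]
      refine ⟨by rw [hzb]; simp [d1.symm, d3]; exact ⟨by omega, Or.inr ga1⟩,
        fun h2 => by rw [hzb]; simp [d2.symm, d4.symm, show ¬((j:ℕ)+1 = (k:ℕ)) from by omega, show ¬((j:ℕ) = (k:ℕ)) from by omega]; exact ga2 h2,
        fun p => ?_⟩
      rw [hzb p]
      try by_cases e1 : (p : ℕ) = (j : ℕ) + 1 <;> by_cases e2 : (p : ℕ) = (j : ℕ) + 2 <;>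
        by_cases e3 : (p : ℕ) = (k : ℕ) + 1 <;> by_cases e4 : (p : ℕ) = (k : ℕ) + 2 <;>
        simp [e1, e2, e3, e4] <;> try omega
theorem extract {n : ℕ} (hn : 3 ≤ n) {b : Option (Fin (n - 2))} :
    ∀ (l : List (Option (Fin (n - 2)))) (x xb y : Fin (n - 1) → Bool),
    stepN' n x b = some xb → stepsN' n x l = some y → b ∈ l →
    ∃ l', stepsN' n xb l' = some y ∧ l'.length + 1 = l.length ∧
      TraceEquiv (indepN' n) l (b :: l') := by
  intro l
  induction l with
  | nil => intro x xb y _ _ hmem; exact absurd hmem (by simp)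
  | cons c rest ih =>
    intro x xb y hb hl hmem
    obtain ⟨xc, hc, hrest⟩ : ∃ xc, stepN' n x c = some xc ∧ stepsN' n xc rest = some y := by
      simpa [stepsN', Option.bind_eq_some_iff] using hl
    by_cases hcb : c = b
    · subst hcb
      rw [hb] at hc
      obtain rfl : xb = xc := by injection hc
      exact ⟨rest, hrest, rfl, te_refl _⟩
    · have hmem' : b ∈ rest := by
        rcases List.mem_cons.1 hmem with h | h
        · exact absurd h.symm hcb
        · exact h
      have hind : indepN' n c b := step_indep hn hcb hc hb
      obtain ⟨z, hzb, hzc⟩ := step_commute hn hind hc hb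
      obtain ⟨rest', hsteps, hlen, hte⟩ := ih xc z y hzb hrest hmem'
      refine ⟨c :: rest', ?_, ?_, ?_⟩
      · simp [stepsN', hzc, hsteps]
      · simp only [List.length_cons]; omega
      · exact te_trans (te_cons c hte) (te_swap_head hind rest')
def bval (b : Bool) : ℤ := if b then 1 else 0

theorem step_flow0 {n : ℕ} (hn : 3 ≤ n) {x z : Fin (n - 1) → Bool}
    {e : Option (Fin (n - 2))} (h : stepN' n x e = some z) (p : Fin (n - 1))
    (hp : (p : ℕ) = 0) :
    bval (z p) = bval (x p) + (if e = none then 1 else 0) := by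
  match e with
  | none =>
    rw [stepN'_none_iff hn] at h
    obtain ⟨g, hz⟩ := h
    have gx : x p = false := by
      rw [show p = ⟨0, by omega⟩ from Fin.ext hp]; exact g
    rw [hz p, hp]
    simp [bval, gx]
  | some j =>
    rw [stepN'_some_iff] at h
    obtain ⟨-, -, hz⟩ := h
    rw [hz p, hp]
    simp [bval]

theorem step_flowp0 {n : ℕ} (hn : 3 ≤ n) {x z : Fin (n - 1) → Bool}
    {e : Option (Fin (n - 2))} (h : stepN' n x e = some z) (j : Fin (n - 2))
    (hj : (j : ℕ) = 0) (p : Fin (n - 1)) (hp : (p : ℕ) = (j : ℕ) + 1) :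
    bval (z p) + (if e = some j then 1 else 0) = bval (x p) := by
  match e with
  | none =>
    rw [stepN'_none_iff hn] at h
    obtain ⟨-, hz⟩ := h
    rw [hz p, hp]
    simp [bval, hj]
  | some k =>
    rw [stepN'_some_iff] at h
    obtain ⟨g1, -, hz⟩ := h
    rw [hz p, hp]
    by_cases hkj : k = j
    · subst hkj
      have gx : x p = true := by
        rw [show p = ⟨(k : ℕ) + 1, by have := k.isLt; omega⟩ from Fin.ext hp]; exact g1
      simp [bval, gx]
    · have hkj' : (k : ℕ) ≠ (j : ℕ) := fun hcon => hkj (Fin.ext hcon)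
      have h1 : ¬ ((j : ℕ) + 1 = (k : ℕ) + 1) := by omega
      have h2 : ¬ ((j : ℕ) + 1 = (k : ℕ) + 2) := by omega
      have h3 : ¬ (some k = some j) := by simpa using hkj
      simp [h1, h2, h3, show ¬((j:ℕ) = k) from by omega, show ¬((j:ℕ) = (k:ℕ)+1) from by omega]

theorem step_flowpS {n : ℕ} (hn : 3 ≤ n) {x z : Fin (n - 1) → Bool}
    {e : Option (Fin (n - 2))} (h : stepN' n x e = some z) (j j' : Fin (n - 2))
    (hj : (j' : ℕ) + 1 = (j : ℕ)) (p : Fin (n - 1)) (hp : (p : ℕ) = (j : ℕ) + 1) :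
    bval (z p) + (if e = some j then 1 else 0)
      = bval (x p) + (if e = some j' then 1 else 0) := by
  match e with
  | none =>
    rw [stepN'_none_iff hn] at h
    obtain ⟨-, hz⟩ := h
    rw [hz p, hp]
    simp [bval]
  | some k =>
    rw [stepN'_some_iff] at h
    obtain ⟨g1, g2, hz⟩ := h
    rw [hz p, hp]
    by_cases hkj : k = j
    · subst hkj
      have gx : x p = true := by
        rw [show p = ⟨(k : ℕ) + 1, by have := k.isLt; omega⟩ from Fin.ext hp]; exact g1
      have h3 : ¬ (some k = some j') := by
        simp only [Option.some_inj]
        intro hcon; rw [hcon] at hj; omega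
      simp [bval, gx, h3]
    · have hkjv : (k : ℕ) ≠ (j : ℕ) := fun hcon => hkj (Fin.ext hcon)
      by_cases hkj' : k = j'
      · subst hkj'
        have hr : (k : ℕ) + 2 < n - 1 := by have hplt := p.isLt; omega
        have gx : x p = false := by
          rw [show p = ⟨(k : ℕ) + 2, hr⟩ from Fin.ext (show (p:ℕ) = (k:ℕ)+2 by omega)]; exact g2 hr
        have h1 : ¬ ((j : ℕ) + 1 = (k : ℕ) + 1) := by omega
        have h2 : (j : ℕ) + 1 = (k : ℕ) + 2 := by omega
        have h3 : ¬ (some k = some j) := by simpa using hkj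
        simp [bval, h1, h2, h3, gx]
      · have hkjv' : (k : ℕ) ≠ (j' : ℕ) := fun hcon => hkj' (Fin.ext hcon)
        have h1 : ¬ ((j : ℕ) + 1 = (k : ℕ) + 1) := by omega
        have h2 : ¬ ((j : ℕ) + 1 = (k : ℕ) + 2) := by omega
        have h3 : ¬ (some k = some j) := by simpa using hkj
        have h4 : ¬ (some k = some j') := by simpa using hkj'
        simp [h1, h2, h3, h4, show ¬((j:ℕ) = k) from by omega, show ¬((j:ℕ) = (k:ℕ)+1) from by omega]

theorem steps_flow0 {n : ℕ} (hn : 3 ≤ n) :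
    ∀ (l : List (Option (Fin (n - 2)))) (x y : Fin (n - 1) → Bool),
    stepsN' n x l = some y → ∀ (p : Fin (n - 1)), (p : ℕ) = 0 →
    bval (y p) = bval (x p) + (l.count none : ℤ) := by
  intro l
  induction l with
  | nil =>
    intro x y h p hp
    obtain rfl : x = y := by simpa [stepsN'] using h
    simp
  | cons c rest ih =>
    intro x y h p hp
    obtain ⟨xc, hc, hrest⟩ : ∃ xc, stepN' n x c = some xc ∧ stepsN' n xc rest = some y := by
      simpa [stepsN', Option.bind_eq_some_iff] using h
    have h1 := step_flow0 hn hc p hp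
    have h2 := ih xc y hrest p hp
    rw [List.count_cons]
    by_cases hcn : c = none
    · simp [hcn] at h1 ⊢
      push_cast
      linarith
    · simp [hcn] at h1 ⊢
      push_cast
      linarith

theorem steps_flowp0 {n : ℕ} (hn : 3 ≤ n) (j : Fin (n - 2)) (hj : (j : ℕ) = 0) :
    ∀ (l : List (Option (Fin (n - 2)))) (x y : Fin (n - 1) → Bool),
    stepsN' n x l = some y → ∀ (p : Fin (n - 1)), (p : ℕ) = (j : ℕ) + 1 →
    bval (y p) + (l.count (some j) : ℤ) = bval (x p) := by
  intro l
  induction l with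
  | nil =>
    intro x y h p hp
    obtain rfl : x = y := by simpa [stepsN'] using h
    simp
  | cons c rest ih =>
    intro x y h p hp
    obtain ⟨xc, hc, hrest⟩ : ∃ xc, stepN' n x c = some xc ∧ stepsN' n xc rest = some y := by
      simpa [stepsN', Option.bind_eq_some_iff] using h
    have h1 := step_flowp0 hn hc j hj p hp
    have h2 := ih xc y hrest p hp
    rw [List.count_cons]
    by_cases hcj : c = some j
    · simp [hcj] at h1 ⊢
      push_cast
      linarith
    · simp [hcj] at h1 ⊢
      push_cast
      linarith

theorem steps_flowpS {n : ℕ} (hn : 3 ≤ n) (j j' : Fin (n - 2)) (hj : (j' : ℕ) + 1 = (j : ℕ)) :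
    ∀ (l : List (Option (Fin (n - 2)))) (x y : Fin (n - 1) → Bool),
    stepsN' n x l = some y → ∀ (p : Fin (n - 1)), (p : ℕ) = (j : ℕ) + 1 →
    bval (y p) + (l.count (some j) : ℤ) = bval (x p) + (l.count (some j') : ℤ) := by
  intro l
  induction l with
  | nil =>
    intro x y h p hp
    obtain rfl : x = y := by simpa [stepsN'] using h
    simp
  | cons c rest ih =>
    intro x y h p hp
    obtain ⟨xc, hc, hrest⟩ : ∃ xc, stepN' n x c = some xc ∧ stepsN' n xc rest = some y := by
      simpa [stepsN', Option.bind_eq_some_iff] using h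
    have h1 := step_flowpS hn hc j j' hj p hp
    have h2 := ih xc y hrest p hp
    have hv : ¬ (j = j') := by intro hcon; rw [hcon] at hj; omega
    have hv' : ¬ (j' = j) := fun hcon => hv hcon.symm
    rw [List.count_cons, List.count_cons]
    by_cases hcj : c = some j
    · simp [hcj, hv, hv'] at h1 ⊢
      push_cast
      linarith
    · by_cases hcj' : c = some j'
      · simp [hcj', hv, hv'] at h1 ⊢
        push_cast
        linarith
      · simp [hcj, hcj'] at h1 ⊢
        push_cast
        linarith

/-- The number of occurrences of each event is determined by the endpoints. -/
theorem count_eq {n : ℕ} (hn : 3 ≤ n) {x y : Fin (n - 1) → Bool}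
    {l₁ l₂ : List (Option (Fin (n - 2)))}
    (h1 : stepsN' n x l₁ = some y) (h2 : stepsN' n x l₂ = some y) :
    ∀ e, l₁.count e = l₂.count e := by
  have key : ∀ K : ℕ, ∀ j : Fin (n - 2), (j : ℕ) = K →
      l₁.count (some j) = l₂.count (some j) := by
    intro K
    induction K with
    | zero =>
      intro j hj
      have p : Fin (n - 1) := ⟨(j : ℕ) + 1, by have := j.isLt; omega⟩
      have f1 := steps_flowp0 hn j hj l₁ x y h1 ⟨(j : ℕ) + 1, by have := j.isLt; omega⟩ rfl
      have f2 := steps_flowp0 hn j hj l₂ x y h2 ⟨(j : ℕ) + 1, by have := j.isLt; omega⟩ rfl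
      have : (l₁.count (some j) : ℤ) = l₂.count (some j) := by linarith
      exact_mod_cast this
    | succ K ih =>
      intro j hj
      have hK : K < n - 2 := by have := j.isLt; omega
      have f1 := steps_flowpS hn j ⟨K, hK⟩ (by simp; omega) l₁ x y h1
        ⟨(j : ℕ) + 1, by have := j.isLt; omega⟩ rfl
      have f2 := steps_flowpS hn j ⟨K, hK⟩ (by simp; omega) l₂ x y h2
        ⟨(j : ℕ) + 1, by have := j.isLt; omega⟩ rfl
      have hprev := ih ⟨K, hK⟩ rfl
      have hprev' : (l₁.count (some (⟨K, hK⟩ : Fin (n-2))) : ℤ) = l₂.count (some (⟨K, hK⟩ : Fin (n-2))) := by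
        exact_mod_cast hprev
      have : (l₁.count (some j) : ℤ) = l₂.count (some j) := by linarith
      exact_mod_cast this
  intro e
  match e with
  | none =>
    have f1 := steps_flow0 hn l₁ x y h1 ⟨0, by omega⟩ rfl
    have f2 := steps_flow0 hn l₂ x y h2 ⟨0, by omega⟩ rfl
    have : (l₁.count none : ℤ) = l₂.count none := by linarith
    exact_mod_cast this
  | some j => exact key (j : ℕ) j rfl
theorem run_nil {n : ℕ} (hn : 3 ≤ n) {x : Fin (n - 1) → Bool}
    {l : List (Option (Fin (n - 2)))} (h : stepsN' n x l = some x) : l = [] := by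
  cases l with
  | nil => rfl
  | cons c l' =>
    exfalso
    have hc := count_eq hn h (show stepsN' n x [] = some x from rfl) c
    simp [List.count_cons] at hc

theorem trace_unique {n : ℕ} (hn : 3 ≤ n) :
    ∀ (N : ℕ) (l₁ l₂ : List (Option (Fin (n - 2)))) (x y : Fin (n - 1) → Bool),
      l₁.length ≤ N → stepsN' n x l₁ = some y → stepsN' n x l₂ = some y →
      TraceEquiv (indepN' n) l₁ l₂ := by
  intro N
  induction N with
  | zero =>
    intro l₁ l₂ x y hlen h1 h2
    obtain rfl : l₁ = [] := List.eq_nil_of_length_eq_zero (by omega)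
    obtain rfl : x = y := by simpa [stepsN'] using h1
    cases l₂ with
    | nil => exact te_refl _
    | cons c l₂' =>
      exfalso
      have hc := count_eq hn h1 h2 c
      simp [List.count_cons] at hc
  | succ N ih =>
    intro l₁ l₂ x y hlen h1 h2
    cases l₂ with
    | nil =>
      obtain rfl : x = y := by simpa [stepsN'] using h2
      obtain rfl : l₁ = [] := run_nil hn h1
      exact te_refl _
    | cons b l₂' =>
      obtain ⟨xb, hb, hrest⟩ : ∃ xb, stepN' n x b = some xb ∧ stepsN' n xb l₂' = some y := by
        simpa [stepsN', Option.bind_eq_some_iff] using h2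
      have hmem : b ∈ l₁ := by
        have hc := count_eq hn h1 h2 b
        have : 0 < l₁.count b := by
          rw [hc]
          simp [List.count_cons]
        exact List.count_pos_iff.mp this
      obtain ⟨l', hsteps, hlen', hte⟩ := extract hn l₁ x xb y hb h1 hmem
      have hte2 : TraceEquiv (indepN' n) l' l₂' := ih l' l₂' xb y (by omega) hsteps hrest
      exact te_trans hte (te_cons b hte2)

theorem reach_antisym {n : ℕ} (hn : 3 ≤ n) (x y : Fin (n - 1) → Bool)
    (hxy : reachN' n x y) (hyx : reachN' n y x) : x = y := by
  obtain ⟨l₁, h1⟩ := hxy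
  obtain ⟨l₂, h2⟩ := hyx
  have h12 : stepsN' n x (l₁ ++ l₂) = some x := by
    rw [stepsN'_append, h1]
    simpa using h2
  have := run_nil hn h12
  obtain rfl : l₁ = [] := by
    cases l₁ with
    | nil => rfl
    | cons a t => simp at this
  simpa [stepsN'] using h1
theorem stepT_iff {m : ℕ} {s s' : Fin m → Bool} {e : Fin m} :
    stepT m s e = some s' ↔
      (s e = true ∧ (∀ h : (e : ℕ) + 1 < m, s ⟨(e : ℕ) + 1, h⟩ = false) ∧
        ∀ p : Fin m, s' p =
          if (p : ℕ) = (e : ℕ) then false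
          else if (p : ℕ) = (e : ℕ) + 1 then true else s p) := by
  unfold stepT
  by_cases hse : s e = true
  · rw [if_pos hse]
    by_cases h1 : (e : ℕ) + 1 < m
    · rw [dif_pos h1]
      by_cases h2 : s ⟨(e : ℕ) + 1, h1⟩ = false
      · rw [if_pos h2]
        constructor
        · rintro ⟨rfl⟩
          refine ⟨hse, fun _ => h2, fun p => ?_⟩
          by_cases e1 : (p : ℕ) = (e : ℕ)
          · have hpe : p = e := Fin.ext e1
            subst hpe
            have hne : p ≠ ⟨(p : ℕ) + 1, h1⟩ := by simp [Fin.ext_iff]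
            simp [Function.update_apply, hne, e1]
          · by_cases e2 : (p : ℕ) = (e : ℕ) + 1
            · have : p = ⟨(e : ℕ) + 1, h1⟩ := Fin.ext e2
              subst this; simp [Function.update_apply, e1, e2]
            · have n1 : p ≠ e := fun hc => e1 (by rw [hc])
              have n2 : p ≠ ⟨(e : ℕ) + 1, h1⟩ := by simp [Fin.ext_iff]; omega
              simp [Function.update_apply, n1, n2, e1, e2]
        · rintro ⟨-, -, hz⟩
          congr 1
          funext p
          rw [hz p]
          by_cases e1 : (p : ℕ) = (e : ℕ)
          · have hpe : p = e := Fin.ext e1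
            subst hpe
            have hne : p ≠ ⟨(p : ℕ) + 1, h1⟩ := by simp [Fin.ext_iff]
            simp [Function.update_apply, hne, e1]
          · by_cases e2 : (p : ℕ) = (e : ℕ) + 1
            · have : p = ⟨(e : ℕ) + 1, h1⟩ := Fin.ext e2
              subst this; simp [Function.update_apply, e1, e2]
            · have n1 : p ≠ e := fun hc => e1 (by rw [hc])
              have n2 : p ≠ ⟨(e : ℕ) + 1, h1⟩ := by simp [Fin.ext_iff]; omega
              simp [Function.update_apply, n1, n2, e1, e2]
      · rw [if_neg h2]
        constructor
        · rintro ⟨⟩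
        · rintro ⟨-, hf, -⟩; exact absurd (hf h1) h2
    · rw [dif_neg h1]
      constructor
      · rintro ⟨rfl⟩
        refine ⟨hse, fun h => absurd h h1, fun p => ?_⟩
        have e2 : ¬ ((p : ℕ) = (e : ℕ) + 1) := by have := p.isLt; omega
        by_cases e1 : (p : ℕ) = (e : ℕ)
        · have hpe : p = e := Fin.ext e1
          subst hpe; simp [Function.update_apply, e1]
        · have n1 : p ≠ e := fun hc => e1 (by rw [hc])
          simp [Function.update_apply, n1, e1, e2]
      · rintro ⟨-, -, hz⟩
        congr 1
        funext p
        rw [hz p]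
        have e2 : ¬ ((p : ℕ) = (e : ℕ) + 1) := by have := p.isLt; omega
        by_cases e1 : (p : ℕ) = (e : ℕ)
        · have hpe : p = e := Fin.ext e1
          subst hpe; simp [Function.update_apply, e1]
        · have n1 : p ≠ e := fun hc => e1 (by rw [hc])
          simp [Function.update_apply, n1, e1, e2]
  · rw [if_neg hse]
    constructor
    · rintro ⟨⟩
    · rintro ⟨hx, -, -⟩; exact absurd hx hse

theorem stepsT_append {m : ℕ} (x : Fin m → Bool) (l₁ l₂ : List (Fin m)) :
    stepsT m x (l₁ ++ l₂) = (stepsT m x l₁).bind fun s => stepsT m s l₂ := by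
  induction l₁ generalizing x with
  | nil => simp [stepsT]
  | cons a l ih =>
    simp only [List.cons_append, stepsT]
    cases stepT m x a with
    | none => simp
    | some s => simp [ih s]

/-- The head of a state of `N′_n`. -/
def hdN (n : ℕ) (hn : 3 ≤ n) (x : Fin (n - 1) → Bool) : Bool := x ⟨0, by omega⟩

/-- The tail of a state of `N′_n`, a state of the tail net with `n - 2` places. -/
def tlN (n : ℕ) (x : Fin (n - 1) → Bool) : Fin (n - 2) → Bool :=
  fun i => x ⟨(i : ℕ) + 1, by have := i.isLt; omega⟩

theorem ext_hd_tl {n : ℕ} (hn : 3 ≤ n) {x y : Fin (n - 1) → Bool}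
    (h0 : hdN n hn x = hdN n hn y) (ht : tlN n x = tlN n y) : x = y := by
  funext p
  by_cases hp : (p : ℕ) = 0
  · have hpe : p = ⟨0, by omega⟩ := Fin.ext hp
    rw [hpe]; exact h0
  · have hlt : (p : ℕ) - 1 < n - 2 := by have := p.isLt; omega
    have : p = ⟨((⟨(p : ℕ) - 1, hlt⟩ : Fin (n - 2)) : ℕ) + 1, by omega⟩ := by
      apply Fin.ext; simp; omega
    rw [this]
    exact congrFun ht ⟨(p : ℕ) - 1, hlt⟩

/-- The isomorphism of state spaces. -/
def eqN (n : ℕ) (hn : 3 ≤ n) : (Fin (n - 1) → Bool) ≃ Bool × (Fin (n - 2) → Bool) where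
  toFun x := (hdN n hn x, tlN n x)
  invFun bt := fun p => if h : (p : ℕ) = 0 then bt.1 else
    bt.2 ⟨(p : ℕ) - 1, by have := p.isLt; omega⟩
  left_inv x := by
    funext p
    by_cases hp : (p : ℕ) = 0
    · simp only [hp, dif_pos]
      show x ⟨0, by omega⟩ = x p
      congr 1
      exact (Fin.ext hp).symm
    · simp only [hp, dif_neg, not_false_iff]
      show x _ = x p
      congr 1
      apply Fin.ext
      simp
      omega
  right_inv bt := by
    refine Prod.ext rfl ?_
    funext i
    show (if h : ((i : ℕ) + 1) = 0 then bt.1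
      else bt.2 ⟨(i : ℕ) + 1 - 1, by have := i.isLt; omega⟩) = bt.2 i
    rw [dif_neg (Nat.succ_ne_zero _)]
    congr 1

theorem step_none_proj {n : ℕ} (hn : 3 ≤ n) {x z : Fin (n - 1) → Bool}
    (h : stepN' n x none = some z) :
    tlN n z = tlN n x ∧ hdN n hn x = false ∧ hdN n hn z = true := by
  rw [stepN'_none_iff hn] at h
  obtain ⟨g, hz⟩ := h
  refine ⟨?_, g, ?_⟩
  · funext i
    show z _ = x _
    rw [hz]
    simp
  · show z ⟨0, by omega⟩ = true
    rw [hz]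
    simp

theorem step_some_proj {n : ℕ} (hn : 3 ≤ n) {x z : Fin (n - 1) → Bool} {j : Fin (n - 2)}
    (h : stepN' n x (some j) = some z) :
    stepT (n - 2) (tlN n x) j = some (tlN n z) ∧ hdN n hn z = hdN n hn x := by
  rw [stepN'_some_iff] at h
  obtain ⟨g1, g2, hz⟩ := h
  constructor
  · rw [stepT_iff]
    refine ⟨g1, fun h => ?_, fun i => ?_⟩
    · exact g2 (by omega)
    · show z _ = _
      rw [hz]
      simp only [tlN]
      by_cases e1 : (i : ℕ) = (j : ℕ) <;> by_cases e2 : (i : ℕ) = (j : ℕ) + 1 <;>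
        simp [e1, e2] <;> omega
  · show z ⟨0, by omega⟩ = x ⟨0, by omega⟩
    rw [hz]
    simp

theorem run_proj {n : ℕ} (hn : 3 ≤ n) :
    ∀ (l : List (Option (Fin (n - 2)))) (x y : Fin (n - 1) → Bool),
    stepsN' n x l = some y →
    hdN n hn x ≤ hdN n hn y ∧ stepsT (n - 2) (tlN n x) (l.filterMap id) = some (tlN n y) := by
  intro l
  induction l with
  | nil =>
    intro x y h
    obtain rfl : x = y := by simpa [stepsN'] using h
    exact ⟨le_refl _, by simp [stepsT]⟩
  | cons c rest ih =>
    intro x y h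
    obtain ⟨xc, hc, hrest⟩ : ∃ xc, stepN' n x c = some xc ∧ stepsN' n xc rest = some y := by
      simpa [stepsN', Option.bind_eq_some_iff] using h
    obtain ⟨ih1, ih2⟩ := ih xc y hrest
    match c with
    | none =>
      obtain ⟨ht, h0, h1⟩ := step_none_proj hn hc
      refine ⟨by rw [h0]; exact Bool.false_le _, ?_⟩
      simpa [List.filterMap_cons, ht] using ih2
    | some j =>
      obtain ⟨ht, h0⟩ := step_some_proj hn hc
      refine ⟨by rw [← h0]; exact ih1, ?_⟩
      have hfm : (some j :: rest).filterMap id = j :: rest.filterMap id := by simp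
      rw [hfm]
      show (stepT (n-2) (tlN n x) j).bind (fun s => stepsT (n-2) s (rest.filterMap id))
        = some (tlN n y)
      rw [ht]
      simpa using ih2

theorem step_some_lift {n : ℕ} (hn : 3 ≤ n) {t t' : Fin (n - 2) → Bool} {j : Fin (n - 2)}
    (h : stepT (n - 2) t j = some t') (x : Fin (n - 1) → Bool) (hx : tlN n x = t) :
    ∃ z, stepN' n x (some j) = some z ∧ tlN n z = t' ∧ hdN n hn z = hdN n hn x := by
  subst hx
  rw [stepT_iff] at h
  obtain ⟨g1, g2, ht⟩ := h
  refine ⟨fun p => if (p : ℕ) = (j : ℕ) + 1 then false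
    else if (p : ℕ) = (j : ℕ) + 2 then true else x p, ?_, ?_, ?_⟩
  · rw [stepN'_some_iff]
    exact ⟨g1, fun h2 => g2 (by omega), fun p => rfl⟩
  · funext i
    rw [ht i]
    show (if ((i : ℕ) + 1 : ℕ) = (j : ℕ) + 1 then false
      else if ((i : ℕ) + 1 : ℕ) = (j : ℕ) + 2 then true else x _) = _
    by_cases e1 : (i : ℕ) = (j : ℕ) <;> by_cases e2 : (i : ℕ) = (j : ℕ) + 1 <;>
      simp [e1, e2, tlN] <;> omega
  · show (if (0 : ℕ) = (j : ℕ) + 1 then false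
      else if (0 : ℕ) = (j : ℕ) + 2 then true else x ⟨0, by omega⟩) = x ⟨0, by omega⟩
    simp

theorem run_lift {n : ℕ} (hn : 3 ≤ n) :
    ∀ (l : List (Fin (n - 2))) (t t' : Fin (n - 2) → Bool),
    stepsT (n - 2) t l = some t' → ∀ (x : Fin (n - 1) → Bool), tlN n x = t →
    ∃ y, stepsN' n x (l.map some) = some y ∧ tlN n y = t' ∧ hdN n hn y = hdN n hn x := by
  intro l
  induction l with
  | nil =>
    intro t t' h x hx
    obtain rfl : t = t' := by simpa [stepsT] using h
    exact ⟨x, by simp [stepsN'], hx, rfl⟩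
  | cons a rest ih =>
    intro t t' h x hx
    obtain ⟨tc, hc, hrest⟩ : ∃ tc, stepT (n - 2) t a = some tc ∧ stepsT (n - 2) tc rest = some t' := by
      simpa [stepsT, Option.bind_eq_some_iff] using h
    obtain ⟨z, hz, hzt, hzh⟩ := step_some_lift hn hc x hx
    obtain ⟨y, hy, hyt, hyh⟩ := ih tc t' hrest z hzt
    refine ⟨y, ?_, hyt, by rw [hyh, hzh]⟩
    show (stepN' n x (some a)).bind (fun s => stepsN' n s (rest.map some)) = some y
    rw [hz]
    simpa using hy

theorem reach_iff {n : ℕ} (hn : 3 ≤ n) (x y : Fin (n - 1) → Bool) :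
    reachN' n x y ↔
      (hdN n hn x ≤ hdN n hn y ∧ reachT (n - 2) (tlN n x) (tlN n y)) := by
  constructor
  · rintro ⟨l, hl⟩
    obtain ⟨h1, h2⟩ := run_proj hn l x y hl
    exact ⟨h1, l.filterMap id, h2⟩
  · rintro ⟨hle, l, hl⟩
    by_cases hx0 : hdN n hn x = hdN n hn y
    · obtain ⟨y', hy', hyt, hyh⟩ := run_lift hn l (tlN n x) (tlN n y) hl x rfl
      obtain rfl : y' = y := ext_hd_tl hn (by rw [hyh, hx0]) hyt
      exact ⟨l.map some, hy'⟩
    · have hxf : hdN n hn x = false := by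
        cases hhx : hdN n hn x
        · rfl
        · cases hhy : hdN n hn y
          · rw [hhx, hhy] at hle; exact absurd hle (by simp)
          · exact absurd (hhx.trans hhy.symm) hx0
      have hyt' : hdN n hn y = true := by
        cases hhy : hdN n hn y
        · exact absurd (hxf.trans hhy.symm) hx0
        · rfl
      -- fire t₁ first
      have hstep : stepN' n x none = some (Function.update x ⟨0, by omega⟩ true) := by
        rw [stepN'_none_iff hn]
        refine ⟨hxf, fun p => ?_⟩
        by_cases hp : (p : ℕ) = 0
        · have hpe : p = ⟨0, by omega⟩ := Fin.ext hp
          rw [hpe]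
          simp [Function.update_apply]
        · have hne : p ≠ ⟨0, by omega⟩ := by simp [Fin.ext_iff]; omega
          simp [Function.update_apply, hne, hp]
      set x1 := Function.update x ⟨0, by omega⟩ true with hx1
      have htl : tlN n x1 = tlN n x := by
        funext i
        show x1 _ = x _
        rw [hx1]
        have : (⟨(i : ℕ) + 1, by have := i.isLt; omega⟩ : Fin (n - 1)) ≠ ⟨0, by omega⟩ := by
          simp [Fin.ext_iff]
        simp [Function.update_apply, this]
      have hhd : hdN n hn x1 = true := by
        rw [hx1]
        simp [hdN, Function.update_apply]
      obtain ⟨y2, hy2, hyt2, hyh2⟩ := run_lift hn l (tlN n x) (tlN n y) hl x1 htl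
      have hyy : y2 = y := ext_hd_tl hn (by rw [hyh2, hhd, hyt']) hyt2
      rw [hyy] at hy2
      refine ⟨none :: l.map some, ?_⟩
      show (stepN' n x none).bind (fun s => stepsN' n s (l.map some)) = some y
      rw [hstep]
      simpa using hy2
def phiT (m : ℕ) (s : Fin m → Bool) : ℕ := ∑ i : Fin m, (if s i then m - (i : ℕ) else 0)

theorem sum_update_nat {m : ℕ} (g : Fin m → ℕ) (p : Fin m) (b : ℕ) :
    ∑ i : Fin m, Function.update g p b i = b + ∑ i ∈ Finset.univ.erase p, g i := by
  rw [← Finset.add_sum_erase Finset.univ (Function.update g p b) (Finset.mem_univ p)]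
  rw [Function.update_self]
  congr 1
  apply Finset.sum_congr rfl
  intro i hi
  rw [Function.update_of_ne (Finset.ne_of_mem_erase hi)]

theorem sum_eq_erase {m : ℕ} (g : Fin m → ℕ) (p : Fin m) :
    ∑ i : Fin m, g i = g p + ∑ i ∈ Finset.univ.erase p, g i :=
  (Finset.add_sum_erase Finset.univ g (Finset.mem_univ p)).symm

theorem phi_update_true {m : ℕ} (s : Fin m → Bool) (p : Fin m) (h : s p = false) :
    phiT m (Function.update s p true) = phiT m s + (m - (p : ℕ)) := by
  have hfun : ∀ i, (if Function.update s p true i then m - (i : ℕ) else 0)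
      = Function.update (fun i => if s i then m - (i : ℕ) else 0) p (m - (p : ℕ)) i := by
    intro i
    by_cases hip : i = p
    · subst hip; simp
    · rw [Function.update_of_ne hip, Function.update_of_ne hip]
  unfold phiT
  rw [Finset.sum_congr rfl (fun i _ => hfun i), sum_update_nat,
    sum_eq_erase (fun i => if s i then m - (i : ℕ) else 0) p]
  simp [h]
  omega

theorem phi_update_false {m : ℕ} (s : Fin m → Bool) (p : Fin m) (h : s p = true) :
    phiT m (Function.update s p false) + (m - (p : ℕ)) = phiT m s := by
  have hfun : ∀ i, (if Function.update s p false i then m - (i : ℕ) else 0)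
      = Function.update (fun i => if s i then m - (i : ℕ) else 0) p 0 i := by
    intro i
    by_cases hip : i = p
    · subst hip; simp
    · rw [Function.update_of_ne hip, Function.update_of_ne hip]
  unfold phiT
  rw [Finset.sum_congr rfl (fun i _ => hfun i), sum_update_nat,
    sum_eq_erase (fun i => if s i then m - (i : ℕ) else 0) p]
  simp [h]
  omega

theorem phiT_le (m : ℕ) (s : Fin m → Bool) : phiT m s ≤ ∑ i : Fin m, (m - (i : ℕ)) :=
  Finset.sum_le_sum (fun i _ => by by_cases h : s i <;> simp [h])

theorem phiT_lt_of_false {m : ℕ} {s : Fin m → Bool} {p : Fin m} (h : s p = false) :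
    phiT m s < ∑ i : Fin m, (m - (i : ℕ)) := by
  apply Finset.sum_lt_sum (fun i _ => by by_cases hi : s i <;> simp [hi])
  refine ⟨p, Finset.mem_univ p, ?_⟩
  rw [h]
  simp only [Bool.false_eq_true, if_false]
  have := p.isLt
  omega

theorem phiT_pos_of_true {m : ℕ} {s : Fin m → Bool} {p : Fin m} (h : s p = true) :
    m - (p : ℕ) ≤ phiT m s := by
  have h2 : (if s p = true then m - (p : ℕ) else 0) ≤ phiT m s :=
    Finset.single_le_sum (f := fun i => if s i then m - (i : ℕ) else 0)
      (fun i _ => Nat.zero_le _) (Finset.mem_univ p)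
  rw [h] at h2
  simpa using h2

theorem reachT_to_allFalse (m : ℕ) (s : Fin m → Bool) : reachT m s (fun _ => false) := by
  suffices h : ∀ (k : ℕ) (s : Fin m → Bool), phiT m s ≤ k → reachT m s (fun _ => false) from
    h (phiT m s) s le_rfl
  intro k
  induction k with
  | zero =>
    intro s hs
    by_cases hall : s = fun _ => false
    · exact ⟨[], by rw [hall]; rfl⟩
    · exfalso
      obtain ⟨p, hp⟩ : ∃ p, s p = true := by
        by_contra hc
        push_neg at hc
        exact hall (funext fun p => by have := hc p; simpa using this)
      have h1 := phiT_pos_of_true hp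
      have := p.isLt
      omega
  | succ k ih =>
    intro s hs
    by_cases hall : s = fun _ => false
    · exact ⟨[], by rw [hall]; rfl⟩
    · obtain ⟨p, hp⟩ : ∃ p, s p = true := by
        by_contra hc
        push_neg at hc
        exact hall (funext fun p => by have := hc p; simpa using this)
      have hFne : (Finset.univ.filter (fun i => s i = true)).Nonempty := ⟨p, by simp [hp]⟩
      obtain ⟨q, hqmem, hqmax⟩ : ∃ q ∈ Finset.univ.filter (fun i => s i = true),
          ∀ r ∈ Finset.univ.filter (fun i => s i = true), r ≤ q :=
        ⟨_, (Finset.univ.filter (fun i => s i = true)).max'_mem hFne,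
          fun r hr => Finset.le_max' _ r hr⟩
      have hq : s q = true := (Finset.mem_filter.mp hqmem).2
      have hqn : ∀ h1 : (q : ℕ) + 1 < m, s ⟨(q : ℕ) + 1, h1⟩ = false := by
        intro h1
        by_contra hc
        have hmem : (⟨(q : ℕ) + 1, h1⟩ : Fin m) ∈ Finset.univ.filter (fun i => s i = true) := by
          simp
          exact Bool.not_eq_false _ |>.mp hc
        have hle : ((⟨(q : ℕ) + 1, h1⟩ : Fin m) : ℕ) ≤ (q : ℕ) := hqmax _ hmem
        simp at hle
      by_cases h1 : (q : ℕ) + 1 < m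
      · set s' := Function.update (Function.update s q false) ⟨(q : ℕ) + 1, h1⟩ true with hs'
        have hne1 : (⟨(q : ℕ) + 1, h1⟩ : Fin m) ≠ q := by
          simp [Fin.ext_iff]
        have hstep : stepT m s q = some s' := by
          rw [stepT_iff]
          refine ⟨hq, hqn, fun i => ?_⟩
          rw [hs']
          by_cases e1 : (i : ℕ) = (q : ℕ)
          · have hiq : i = q := Fin.ext e1
            rw [hiq]
            rw [Function.update_of_ne (Ne.symm hne1), Function.update_self]
            simp [e1]
          · by_cases e2 : (i : ℕ) = (q : ℕ) + 1
            · have hiq : i = ⟨(q : ℕ) + 1, h1⟩ := Fin.ext e2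
              rw [hiq, Function.update_self]
              simp [e1, e2]
            · have n1 : i ≠ q := fun hc => e1 (by rw [hc])
              have n2 : i ≠ ⟨(q : ℕ) + 1, h1⟩ := by simp [Fin.ext_iff]; omega
              rw [Function.update_of_ne n2, Function.update_of_ne n1]
              simp [e1, e2]
        have hval : (Function.update s q false) ⟨(q : ℕ) + 1, h1⟩ = false := by
          rw [Function.update_of_ne hne1]
          exact hqn h1
        have e1 : phiT m s' = phiT m (Function.update s q false) + (m - ((q : ℕ) + 1)) := by
          rw [hs']
          exact phi_update_true _ _ hval
        have e2 := phi_update_false s q hq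
        have hqlt := q.isLt
        obtain ⟨l, hl⟩ := ih s' (by omega)
        refine ⟨q :: l, ?_⟩
        show (stepT m s q).bind (fun t => stepsT m t l) = _
        rw [hstep]
        simpa using hl
      · set s' := Function.update s q false with hs'
        have hstep : stepT m s q = some s' := by
          rw [stepT_iff]
          refine ⟨hq, fun h => absurd h h1, fun i => ?_⟩
          rw [hs']
          by_cases e1 : (i : ℕ) = (q : ℕ)
          · have hiq : i = q := Fin.ext e1
            rw [hiq, Function.update_self]
            simp [e1]
          · have e2 : ¬ ((i : ℕ) = (q : ℕ) + 1) := by have := i.isLt; omega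
            have n1 : i ≠ q := fun hc => e1 (by rw [hc])
            rw [Function.update_of_ne n1]
            simp [e1, e2]
        have e2 := phi_update_false s q hq
        have hqlt := q.isLt
        obtain ⟨l, hl⟩ := ih s' (by rw [hs']; omega)
        refine ⟨q :: l, ?_⟩
        show (stepT m s q).bind (fun t => stepsT m t l) = _
        rw [hstep]
        simpa using hl

theorem reachT_from_allTrue (m : ℕ) (y : Fin m → Bool) : reachT m (fun _ => true) y := by
  suffices h : ∀ (k : ℕ) (y : Fin m → Bool),
      (∑ i : Fin m, (m - (i : ℕ))) - phiT m y ≤ k → reachT m (fun _ => true) y from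
    h _ y le_rfl
  intro k
  induction k with
  | zero =>
    intro y hy
    by_cases hall : y = fun _ => true
    · exact ⟨[], by rw [hall]; rfl⟩
    · exfalso
      obtain ⟨p, hp⟩ : ∃ p, y p = false := by
        by_contra hc
        push_neg at hc
        exact hall (funext fun p => by have := hc p; simpa using this)
      have := phiT_lt_of_false hp
      omega
  | succ k ih =>
    intro y hy
    by_cases hall : y = fun _ => true
    · exact ⟨[], by rw [hall]; rfl⟩
    · obtain ⟨p, hp⟩ : ∃ p, y p = false := by
        by_contra hc
        push_neg at hc
        exact hall (funext fun p => by have := hc p; simpa using this)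
      have hylt := phiT_lt_of_false hp
      have hFne : (Finset.univ.filter (fun i => y i = false)).Nonempty := ⟨p, by simp [hp]⟩
      obtain ⟨q, hqmem, hqmax⟩ : ∃ q ∈ Finset.univ.filter (fun i => y i = false),
          ∀ r ∈ Finset.univ.filter (fun i => y i = false), r ≤ q :=
        ⟨_, (Finset.univ.filter (fun i => y i = false)).max'_mem hFne,
          fun r hr => Finset.le_max' _ r hr⟩
      have hq : y q = false := (Finset.mem_filter.mp hqmem).2
      have hqn : ∀ h1 : (q : ℕ) + 1 < m, y ⟨(q : ℕ) + 1, h1⟩ = true := by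
        intro h1
        by_contra hc
        have hmem : (⟨(q : ℕ) + 1, h1⟩ : Fin m) ∈ Finset.univ.filter (fun i => y i = false) := by
          simp
          exact Bool.not_eq_true _ |>.mp hc
        have hle : ((⟨(q : ℕ) + 1, h1⟩ : Fin m) : ℕ) ≤ (q : ℕ) := hqmax _ hmem
        simp at hle
      have hqlt := q.isLt
      by_cases h1 : (q : ℕ) + 1 < m
      · set z := Function.update (Function.update y ⟨(q : ℕ) + 1, h1⟩ false) q true with hz
        have hne1 : q ≠ (⟨(q : ℕ) + 1, h1⟩ : Fin m) := by
          simp [Fin.ext_iff]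
        have hstep : stepT m z q = some y := by
          rw [stepT_iff]
          refine ⟨by rw [hz, Function.update_self], fun h => ?_, fun i => ?_⟩
          · rw [hz, Function.update_of_ne (Ne.symm hne1), Function.update_self]
          · by_cases e1 : (i : ℕ) = (q : ℕ)
            · have hiq : i = q := Fin.ext e1
              rw [hiq]
              simp [e1, hq]
            · by_cases e2 : (i : ℕ) = (q : ℕ) + 1
              · have hiq : i = ⟨(q : ℕ) + 1, h1⟩ := Fin.ext e2
                rw [hiq]
                simp [e1, e2, hqn h1]
              · have n1 : i ≠ q := fun hc => e1 (by rw [hc])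
                have n2 : i ≠ ⟨(q : ℕ) + 1, h1⟩ := by simp [Fin.ext_iff]; omega
                rw [hz, Function.update_of_ne n1, Function.update_of_ne n2]
                simp [e1, e2]
        have hval : (Function.update y ⟨(q : ℕ) + 1, h1⟩ false) q = false := by
          rw [Function.update_of_ne hne1]
          exact hq
        have eA : phiT m z = phiT m (Function.update y ⟨(q : ℕ) + 1, h1⟩ false) + (m - (q : ℕ)) := by
          rw [hz]
          exact phi_update_true _ _ hval
        have eB : phiT m (Function.update y ⟨(q : ℕ) + 1, h1⟩ false) + (m - ((q : ℕ) + 1))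
            = phiT m y := phi_update_false y ⟨(q : ℕ) + 1, h1⟩ (hqn h1)
        have hzle := phiT_le m z
        obtain ⟨l, hl⟩ := ih z (by omega)
        refine ⟨l ++ [q], ?_⟩
        rw [stepsT_append, hl]
        show (stepT m z q).bind (fun t => stepsT m t []) = _
        rw [hstep]
        rfl
      · set z := Function.update y q true with hz
        have hstep : stepT m z q = some y := by
          rw [stepT_iff]
          refine ⟨by rw [hz, Function.update_self], fun h => absurd h h1, fun i => ?_⟩
          by_cases e1 : (i : ℕ) = (q : ℕ)
          · have hiq : i = q := Fin.ext e1
            rw [hiq]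
            simp [e1, hq]
          · have e2 : ¬ ((i : ℕ) = (q : ℕ) + 1) := by have := i.isLt; omega
            have n1 : i ≠ q := fun hc => e1 (by rw [hc])
            rw [hz, Function.update_of_ne n1]
            simp [e1, e2]
        have eA : phiT m z = phiT m y + (m - (q : ℕ)) := by
          rw [hz]
          exact phi_update_true _ _ hq
        have hzle := phiT_le m z
        obtain ⟨l, hl⟩ := ih z (by omega)
        refine ⟨l ++ [q], ?_⟩
        rw [stepsT_append, hl]
        show (stepT m z q).bind (fun t => stepsT m t []) = _
        rw [hstep]
        rfl
/-- The state category of `N′_n` is a poset (at most one trace between two states, and the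
reachability preorder is antisymmetric) and is isomorphic, as a category (equivalently, as
an ordered set), to the product `𝕀 × C_{n-2}` of the two-element chain `𝕀 = {0 < 1}` (here
`Bool` with `false < true`) and the state category `C_{n-2}` of `N_{n-2}`; in particular it
has a least and a greatest element. -/
theorem stateCategoryN'_iso_product (n : ℕ) (hn : 3 ≤ n) :
    (∀ (x y : Fin (n - 1) → Bool) (l₁ l₂ : List (Option (Fin (n - 2)))),
        stepsN' n x l₁ = some y → stepsN' n x l₂ = some y →
        TraceEquiv (indepN' n) l₁ l₂) ∧
    (∀ x y, reachN' n x y → reachN' n y x → x = y) ∧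
    (∃ e : (Fin (n - 1) → Bool) ≃ Bool × (Fin (n - 2) → Bool),
        ∀ x y, reachN' n x y ↔ ((e x).1 ≤ (e y).1 ∧ reachT (n - 2) (e x).2 (e y).2)) ∧
    (∃ bot, ∀ x, reachN' n bot x) ∧ (∃ top, ∀ x, reachN' n x top) := by
  refine ⟨?_, ?_, ?_, ?_, ?_⟩
  · intro x y l₁ l₂ h1 h2
    exact trace_unique hn l₁.length l₁ l₂ x y le_rfl h1 h2
  · exact reach_antisym hn
  · exact ⟨eqN n hn, fun x y => reach_iff hn x y⟩
  · refine ⟨(eqN n hn).symm (false, fun _ => true), fun x => ?_⟩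
    rw [reach_iff hn]
    have hb : hdN n hn ((eqN n hn).symm (false, fun _ => true)) = false :=
      congrArg Prod.fst ((eqN n hn).apply_symm_apply (false, fun _ => true))
    have ht : tlN n ((eqN n hn).symm (false, fun _ => true)) = fun _ => true :=
      congrArg Prod.snd ((eqN n hn).apply_symm_apply (false, fun _ => true))
    rw [hb, ht]
    exact ⟨Bool.false_le _, reachT_from_allTrue (n - 2) (tlN n x)⟩
  · refine ⟨(eqN n hn).symm (true, fun _ => false), fun x => ?_⟩
    rw [reach_iff hn]
    have hb : hdN n hn ((eqN n hn).symm (true, fun _ => false)) = true :=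
      congrArg Prod.fst ((eqN n hn).apply_symm_apply (true, fun _ => false))
    have ht : tlN n ((eqN n hn).symm (true, fun _ => false)) = fun _ => false :=
      congrArg Prod.snd ((eqN n hn).apply_symm_apply (true, fun _ => false))
    rw [hb, ht]
    exact ⟨Bool.le_true _, reachT_to_allFalse (n - 2) (tlN n x)⟩
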